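/- Let q ≥ 1 be an integer and k = q + 1. Let G be the group given by the presentation with generators a_y for y ∈ ℤ/kℤ and relators a_0 together with a_y · a_z⁻¹ · a_{z−y} for all y, z ∈ ℤ/kℤ with y ≠ 0 and y ≠ z. Then G is isomorphic to the cyclic group ℤ/kℤ via the homomorphism sending each generator a_y to y. (This computes the fundamental group of the unique Singer cyclic digon of order q, which is cyclic of order k.) -/

import Mathlib

/-- The relators of the fundamental group of the Singer cyclic digon of order `q = k - 1`:
generators `a_y` for `y ∈ ℤ/kℤ`; relators `a_0` and `a_y * a_z⁻¹ * a_{z-y}` for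
`y, z ∈ ℤ/kℤ` with `y ≠ 0` and `y ≠ z`. -/
def digonRels (k : ℕ) : Set (FreeGroup (ZMod k)) :=
  {FreeGroup.of (0 : ZMod k)} ∪
    {w : FreeGroup (ZMod k) | ∃ y z : ZMod k, y ≠ 0 ∧ y ≠ z ∧
      w = FreeGroup.of y * (FreeGroup.of z)⁻¹ * FreeGroup.of (z - y)}

section aux

variable {k : ℕ}

/-- Any relator maps to `1` in the presented group. -/
lemma digon_rel_eq_one {r : FreeGroup (ZMod k)} (hr : r ∈ digonRels k) :
    PresentedGroup.mk (digonRels k) r = 1 :=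
  (QuotientGroup.eq_one_iff r).mpr (Subgroup.subset_normalClosure hr)

lemma digon_of_zero : (PresentedGroup.of 0 : PresentedGroup (digonRels k)) = 1 :=
  digon_rel_eq_one (Or.inl rfl)

lemma digon_of_rel {y z : ZMod k} (hy : y ≠ 0) (hyz : y ≠ z) :
    (PresentedGroup.of y : PresentedGroup (digonRels k)) * (PresentedGroup.of z)⁻¹ *
      PresentedGroup.of (z - y) = 1 := by
  have := digon_rel_eq_one (k := k) (Or.inr ⟨y, z, hy, hyz, rfl⟩)
  simpa [map_mul, map_inv, PresentedGroup.of] using this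

/-- `a_{w+y} = a_w * a_y` when `w ≠ 0` and `y ≠ 0`. -/
lemma digon_of_add {w y : ZMod k} (hw : w ≠ 0) (hy : y ≠ 0) :
    (PresentedGroup.of (w + y) : PresentedGroup (digonRels k)) =
      PresentedGroup.of w * PresentedGroup.of y := by
  have h := digon_of_rel (k := k) (y := y) (z := w + y) hy (by
    intro h; apply hw; linear_combination -h)
  have h2 : w + y - y = w := by ring
  rw [h2] at h
  have := mul_eq_one_iff_inv_eq.mp h
  rw [mul_inv_rev, inv_inv] at this
  rw [← this]; group

end aux

/-- the group presented by generators `a_y` (`y ∈ ℤ/kℤ`) and relators `a_0`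
and `a_y * a_z⁻¹ * a_{z-y}` (for `y ≠ 0`, `y ≠ z`) is isomorphic to the cyclic group
`ℤ/kℤ` via the homomorphism sending each generator `a_y` to `y`. -/
theorem digon_fundamental_group (q : ℕ) (hq : 1 ≤ q) (k : ℕ) (hk : k = q + 1) :
    ∃ e : PresentedGroup (digonRels k) ≃* Multiplicative (ZMod k),
      ∀ y : ZMod k, e (PresentedGroup.of y) = Multiplicative.ofAdd y := by
  haveI : Fact (1 < k) := ⟨by omega⟩
  have hone : (1 : ZMod k) ≠ 0 := one_ne_zero
  set G := PresentedGroup (digonRels k) with hG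
  set g : G := PresentedGroup.of (1 : ZMod k) with hg
  -- key: a_n = g ^ n
  have key : ∀ n : ℕ, (PresentedGroup.of ((n : ZMod k)) : G) = g ^ n := by
    intro n
    induction n with
    | zero => simpa using digon_of_zero
    | succ n ih =>
      push_cast
      by_cases hn : ((n : ZMod k)) = 0
      · have h1 : g ^ n = 1 := by rw [← ih, hn]; exact digon_of_zero
        rw [hn, zero_add, pow_succ, h1, one_mul]
      · rw [digon_of_add hn hone, ih, pow_succ]
  have hgk : g ^ k = 1 := by
    have := key k
    rw [ZMod.natCast_self] at this
    rw [← this]; exact digon_of_zero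
  have keyv : ∀ y : ZMod k, (PresentedGroup.of y : G) = g ^ (y.val : ℤ) := by
    intro y
    rw [zpow_natCast, ← key, ZMod.natCast_val, ZMod.cast_id]
  -- the forward homomorphism
  have hrel : ∀ r ∈ digonRels k,
      FreeGroup.lift (fun y : ZMod k => Multiplicative.ofAdd y) r = 1 := by
    rintro r (rfl | ⟨y, z, hy, hyz, rfl⟩)
    · simp
    · simp only [map_mul, map_inv, FreeGroup.lift_apply_of, ← ofAdd_neg, ← ofAdd_add]
      rw [show y + -z + (z - y) = 0 by ring]; rfl
  let φ : G →* Multiplicative (ZMod k) := PresentedGroup.toGroup hrel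
  have hφof : ∀ y : ZMod k, φ (PresentedGroup.of y) = Multiplicative.ofAdd y := fun y =>
    PresentedGroup.toGroup.of hrel
  -- the inverse homomorphism
  have hf0 : (zmultiplesHom (Additive G) (Additive.ofMul g)) (k : ℤ) = 0 := by
    simp only [zmultiplesHom_apply, ← ofMul_zpow, zpow_natCast, hgk]
    rfl
  let F : ZMod k →+ Additive G :=
    ZMod.lift k ⟨zmultiplesHom (Additive G) (Additive.ofMul g), hf0⟩
  let ψ : Multiplicative (ZMod k) →* G := AddMonoidHom.toMultiplicativeLeft F
  have hψ : ∀ y : ZMod k, ψ (Multiplicative.ofAdd y) = g ^ (y.val : ℤ) := by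
    intro y
    have hy : ((y.val : ℤ) : ZMod k) = y := by
      push_cast
      rw [ZMod.natCast_val, ZMod.cast_id]
    have : F y = (y.val : ℤ) • Additive.ofMul g := by
      conv_lhs => rw [← hy]
      rw [ZMod.lift_coe]; rfl
    show Additive.toMul (F y) = g ^ (y.val : ℤ)
    rw [this, ← ofMul_zpow]; rfl
  have h1 : ψ.comp φ = MonoidHom.id G := by
    ext y
    simp only [MonoidHom.comp_apply, MonoidHom.id_apply]
    rw [hφof y, hψ y, ← keyv]; rfl
  have h2 : φ.comp ψ = MonoidHom.id (Multiplicative (ZMod k)) := by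
    ext x
    change Multiplicative (ZMod k) at x
    show φ (ψ x) = x
    have : x = Multiplicative.ofAdd x.toAdd := rfl
    rw [this, hψ, map_zpow, hg, hφof, ← ofAdd_zsmul]
    congr 1
    rw [zsmul_eq_mul, mul_one]
    push_cast
    rw [ZMod.natCast_val, ZMod.cast_id]
  exact ⟨MonoidHom.toMulEquiv φ ψ h1 h2, hφof⟩
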